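/- Let r ∈ (0,1) and let (f_n), (u_n), (w_n) be sequences of nonnegative reals with f_n > 0, 0 ≤ u_n, w_n ≤ f_n, satisfying w_0 = u_0 and w_n = u_n + α·w_{n-1} + ∑_{k=0}^{n-1} c_k·w_{n-k-1} for n ≥ 1, where α ≥ 0, c_k ≥ 0 for all k, u_0 > 0, and ∑_{k=0}^∞ c_k·r^{k+1} converges. If ∑_{n=0}^{∞} u_n·r^{n+1} converges, and α·r + ∑_{k=0}^∞ c_k r^{k+1} < 1 (evaluated appropriately), then ∑_{n=0}^{∞} w_n·r^{n+1} converges. -/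

import Mathlib

theorem stmt_19 (r : ℝ) (hr : r ∈ Set.Ioo (0 : ℝ) 1)
    (f u w c : ℕ → ℝ)
    (hfpos : ∀ n, 0 < f n)
    (hu : ∀ n, 0 ≤ u n ∧ u n ≤ f n) (hwb : ∀ n, 0 ≤ w n ∧ w n ≤ f n)
    (α : ℝ) (hα : 0 ≤ α) (hc : ∀ k, 0 ≤ c k)
    (hu0 : 0 < u 0)
    (hw0 : w 0 = u 0)
    (hwrec : ∀ n : ℕ, w (n + 1) = u (n + 1) + α * w n +
      ∑ k ∈ Finset.range (n + 1), c k * w (n - k))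
    (hcsum : Summable (fun k : ℕ => c k * r ^ (k + 1)))
    (husum : Summable (fun n : ℕ => u n * r ^ (n + 1)))
    (hsmall : α * r + (∑' k : ℕ, c k * r ^ (k + 1)) < 1) :
    Summable (fun n : ℕ => w n * r ^ (n + 1)) := by
  obtain ⟨hr0, hr1⟩ := hr
  set a : ℕ → ℝ := fun k => c k * r ^ (k + 1) with ha
  set b : ℕ → ℝ := fun n => w n * r ^ (n + 1) with hb
  have hbnn : ∀ n, 0 ≤ b n := fun n => mul_nonneg (hwb n).1 (by positivity)
  have hann : ∀ n, 0 ≤ a n := fun n => mul_nonneg (hc n) (by positivity)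
  have hunn : ∀ n, 0 ≤ u n * r ^ (n + 1) := fun n => mul_nonneg (hu n).1 (by positivity)
  set C := ∑' k, a k with hC
  set U := ∑' n, u n * r ^ (n + 1) with hU
  have hCnn : 0 ≤ C := tsum_nonneg hann
  have hUnn : 0 ≤ U := tsum_nonneg hunn
  have hq : α * r + C < 1 := hsmall
  have hqnn : 0 ≤ α * r + C := by positivity
  have hqpos : 0 < 1 - (α * r + C) := by linarith
  set T : ℕ → ℝ := fun N => ∑ m ∈ Finset.range N, b m with hT
  have hTmono : Monotone T := by
    intro m n hmn
    exact Finset.sum_le_sum_of_subset_of_nonneg (Finset.range_subset_range.2 hmn)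
      (fun i _ _ => hbnn i)
  have hTnn : ∀ N, 0 ≤ T N := fun N => Finset.sum_nonneg fun i _ => hbnn i
  -- swap of the convolution double sum
  have key : ∀ N, ∑ n ∈ Finset.range N, ∑ k ∈ Finset.range (n + 1), a k * b (n - k)
      = ∑ k ∈ Finset.range N, a k * T (N - k) := by
    intro N
    induction N with
    | zero => simp
    | succ N ih =>
      rw [Finset.sum_range_succ, ih]
      have hstep : ∀ k ∈ Finset.range (N + 1),
          a k * T (N + 1 - k) = a k * T (N - k) + a k * b (N - k) := by
        intro k hk
        have hk' : k ≤ N := Nat.lt_succ_iff.mp (Finset.mem_range.mp hk)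
        have h1 : N + 1 - k = (N - k) + 1 := by omega
        rw [h1, hT]
        simp [Finset.sum_range_succ, mul_add]
      rw [Finset.sum_congr rfl hstep, Finset.sum_add_distrib,
        Finset.sum_range_succ (fun k => a k * T (N - k))]
      simp [hT]
  have haC : ∀ N, ∑ k ∈ Finset.range N, a k ≤ C := fun N => Summable.sum_le_tsum _ (fun i _ => hann i) hcsum
  have huU : ∀ N, ∑ m ∈ Finset.range N, u m * r ^ (m + 1) ≤ U :=
    fun N => Summable.sum_le_tsum _ (fun i _ => hunn i) husum
  set B := U / (1 - (α * r + C)) with hB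
  have hBnn : 0 ≤ B := div_nonneg hUnn (le_of_lt hqpos)
  have hTbound : ∀ N, T N ≤ B := by
    intro N
    match N with
    | 0 => simpa [hT] using hBnn
    | Nat.succ M =>
      have expand : T (M + 1) = ∑ m ∈ Finset.range (M + 1), u m * r ^ (m + 1)
          + α * r * T M
          + ∑ n ∈ Finset.range M, ∑ k ∈ Finset.range (n + 1), a k * b (n - k) := by
        have hb0 : b 0 = u 0 * r ^ (0 + 1) := by simp [hb, hw0]
        have hbn : ∀ n, b (n + 1) = u (n + 1) * r ^ (n + 1 + 1)
            + α * r * b n + ∑ k ∈ Finset.range (n + 1), a k * b (n - k) := by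
          intro n
          have hcw : ∀ k ∈ Finset.range (n + 1),
              c k * w (n - k) * r ^ (n + 1 + 1) = a k * b (n - k) := by
            intro k hk
            have hk' : k ≤ n := Nat.lt_succ_iff.mp (Finset.mem_range.mp hk)
            have hpow : r ^ (n + 1 + 1) = r ^ (k + 1) * r ^ ((n - k) + 1) := by
              rw [← pow_add]
              congr 1
              omega
            simp only [ha, hb, hpow]
            ring
          simp only [hb, hwrec n]
          rw [add_mul, add_mul, Finset.sum_mul, Finset.sum_congr rfl hcw]
          ring_nf
          congr 1
          refine Finset.sum_congr rfl fun x _ => ?_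
          simp only [hb]
          ring
        have h1 : T (M + 1) = b 0 + ∑ n ∈ Finset.range M, b (n + 1) := by
          simp only [hT]
          rw [Finset.sum_range_succ']
          ring
        rw [h1, Finset.sum_congr rfl (fun n _ => hbn n), Finset.sum_add_distrib,
          Finset.sum_add_distrib, ← Finset.mul_sum,
          Finset.sum_range_succ' (fun m => u m * r ^ (m + 1)) M, hb0]
        simp only [hT]
        ring
      have hconv : ∑ n ∈ Finset.range M, ∑ k ∈ Finset.range (n + 1), a k * b (n - k)
          ≤ C * T (M + 1) := by
        rw [key M]
        calc ∑ k ∈ Finset.range M, a k * T (M - k)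
            ≤ ∑ k ∈ Finset.range M, a k * T (M + 1) := by
              apply Finset.sum_le_sum
              intro k _
              exact mul_le_mul_of_nonneg_left (hTmono (by omega)) (hann k)
          _ = (∑ k ∈ Finset.range M, a k) * T (M + 1) := by rw [Finset.sum_mul]
          _ ≤ C * T (M + 1) := mul_le_mul_of_nonneg_right (haC M) (hTnn _)
      have hineq : T (M + 1) ≤ U + (α * r + C) * T (M + 1) := by
        have h1 : α * r * T M ≤ α * r * T (M + 1) :=
          mul_le_mul_of_nonneg_left (hTmono (by omega)) (by positivity)
        calc T (M + 1) = _ := expand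
          _ ≤ U + α * r * T (M + 1) + C * T (M + 1) := by
              have h2 := huU (M + 1)
              linarith [h1, hconv]
          _ = U + (α * r + C) * T (M + 1) := by ring
      have hfin : (1 - (α * r + C)) * T (M + 1) ≤ U := by nlinarith
      rw [hB, le_div_iff₀ hqpos]
      nlinarith [hfin]
  exact summable_of_sum_range_le hbnn (fun N => hTbound N)
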